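/- For every integer t ≥ 0, let K₁(x,y,z) = x² + 4y² + (8·3^t + 1)z² + 4yz, K₂(x,y,z) = x² + y² + 32·3^t·z², and K₃(x,y,z) = 2x² + 2y² + (8·3^t + 1)z² + 2yz + 2zx. Then K₁, K₂, K₃ lie in the same genus, and for every positive integer n, 2·r(n², K₁) = r(n², K₂) + r(n², K₃). -/

import Mathlib

open Matrix

noncomputable section

/-- A ternary quadratic form `a·x² + b·y² + c·z² + d·yz + e·zx + g·xy`
with integer coefficients. -/
structure TernaryQF where
  a : ℤ
  b : ℤ
  c : ℤ
  d : ℤ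
  e : ℤ
  g : ℤ
deriving DecidableEq

namespace TernaryQF

/-- Evaluation of the form in any commutative ring. -/
def evalR {R : Type*} [CommRing R] (f : TernaryQF) (x y z : R) : R :=
  (f.a : R) * x ^ 2 + (f.b : R) * y ^ 2 + (f.c : R) * z ^ 2 +
    (f.d : R) * (y * z) + (f.e : R) * (z * x) + (f.g : R) * (x * y)

def eval (f : TernaryQF) (x y z : ℤ) : ℤ := f.evalR x y z

def evalVec (f : TernaryQF) (v : Fin 3 → ℤ) : ℤ := f.eval (v 0) (v 1) (v 2)

/-- Non-classic integral: the coefficients are coprime. -/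
def NonClassic (f : TernaryQF) : Prop :=
  Nat.gcd f.a.natAbs (Nat.gcd f.b.natAbs (Nat.gcd f.c.natAbs
    (Nat.gcd f.d.natAbs (Nat.gcd f.e.natAbs f.g.natAbs)))) = 1

/-- Positive definiteness (equivalent, for a rational symmetric matrix, to
positivity of the Gram matrix). -/
def PosDefn (f : TernaryQF) : Prop :=
  ∀ x y z : ℤ, ¬(x = 0 ∧ y = 0 ∧ z = 0) → 0 < f.eval x y z

/-- `r n f`: the number of representations of `n` by `f`. -/
def r (f : TernaryQF) (n : ℤ) : ℕ :=
  Set.ncard {v : Fin 3 → ℤ | f.evalVec v = n}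

/-- `4·df`, four times the discriminant (determinant of the Gram matrix), an integer. -/
def disc4 (f : TernaryQF) : ℤ :=
  4 * f.a * f.b * f.c + f.g * f.d * f.e - f.a * f.d ^ 2 - f.b * f.e ^ 2 - f.c * f.g ^ 2

/-- `h_p(df, λ) = (p^{λ+1}-1)/(p-1) - (−4df/p)·(p^{λ}-1)/(p-1)`, written via geometric sums. -/
def hFactor (f : TernaryQF) (p lam : ℕ) : ℤ :=
  (∑ i ∈ Finset.range (lam + 1), (p : ℤ) ^ i) -
    jacobiSym (-f.disc4) p * ∑ i ∈ Finset.range lam, (p : ℤ) ^ i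

/-- A (positive definite non-classic integral) ternary form is strongly s-regular if it
represents a nonzero square and the representation numbers of squares satisfy the
multiplicative formula of Cooper–Lam type. -/
def StronglySRegular (f : TernaryQF) : Prop :=
  (∃ n : ℕ, 0 < n ∧ f.r ((n : ℤ) ^ 2) ≠ 0) ∧
    ∀ n₁ n₂ : ℕ, 0 < n₁ → 0 < n₂ →
      (∀ p : ℕ, p.Prime → p ∣ n₁ → p = 2 ∨ (p : ℤ) ∣ f.disc4) →
      Odd n₂ → IsCoprime (n₂ : ℤ) f.disc4 →
      (f.r ((n₁ : ℤ) ^ 2 * (n₂ : ℤ) ^ 2) : ℤ) =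
        (f.r ((n₁ : ℤ) ^ 2) : ℤ) *
          ∏ p ∈ n₂.primeFactors, f.hFactor p (n₂.factorization p)

/-- `m_s(f)`: the minimal positive integer whose square is represented by `f`. -/
def msf (f : TernaryQF) : ℕ := sInf {n : ℕ | 0 < n ∧ f.r ((n : ℤ) ^ 2) ≠ 0}

/-- The (rational) Gram matrix of the form. -/
def gram (f : TernaryQF) : Matrix (Fin 3) (Fin 3) ℚ :=
  !![(f.a : ℚ), (f.g : ℚ) / 2, (f.e : ℚ) / 2;
     (f.g : ℚ) / 2, (f.b : ℚ), (f.d : ℚ) / 2;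
     (f.e : ℚ) / 2, (f.d : ℚ) / 2, (f.c : ℚ)]

/-- Equivalence of ternary forms over ℤ. -/
def TEquiv (f g : TernaryQF) : Prop :=
  ∃ U : Matrix (Fin 3) (Fin 3) ℤ, IsUnit U.det ∧
    (U.map ((↑) : ℤ → ℚ)).transpose * f.gram * U.map ((↑) : ℤ → ℚ) = g.gram

/-- The Gram matrix viewed over `ℚ_p`. -/
def gramPadic (p : ℕ) [Fact p.Prime] (f : TernaryQF) : Matrix (Fin 3) (Fin 3) ℚ_[p] :=
  f.gram.map (fun x : ℚ => (x : ℚ_[p]))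

/-- The coercion `ℤ_p → ℚ_p`. -/
def coeQp {p : ℕ} [Fact p.Prime] (x : ℤ_[p]) : ℚ_[p] := x

/-- Two matrices over `ℚ_p` are equivalent over `ℤ_p` if `Uᵀ A U = B` for some
`U ∈ GL₃(ℤ_p)`. -/
def EquivZp (p : ℕ) [Fact p.Prime] (A B : Matrix (Fin 3) (Fin 3) ℚ_[p]) : Prop :=
  ∃ U : Matrix (Fin 3) (Fin 3) ℤ_[p], IsUnit U.det ∧
    (U.map coeQp).transpose * A * U.map coeQp = B

/-- Two forms lie in the same genus: locally equivalent at every (finite) prime. -/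
def SameGenus (f g : TernaryQF) : Prop :=
  ∀ (p : ℕ) [Fact p.Prime], EquivZp p (gramPadic p f) (gramPadic p g)

/-- `Λ_p(f) = {v ∈ ℤ³ : f(v+z) ≡ f(z) (mod p) for all z ∈ ℤ³}`. -/
def Lam (p : ℕ) (f : TernaryQF) : Set (Fin 3 → ℤ) :=
  {v | ∀ z : Fin 3 → ℤ, (p : ℤ) ∣ (f.evalVec (v + z) - f.evalVec z)}

/-- `g` is a Watson `λ_p`-transform of `f`: `g` is obtained by expressing `f` on a basis
of `Λ_p(f)` and dividing by the largest power of `p` dividing all values. -/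
def IsWatson (p : ℕ) (f g : TernaryQF) : Prop :=
  ∃ (B : Matrix (Fin 3) (Fin 3) ℤ) (k : ℕ),
    Set.range B.mulVec = Lam p f ∧
    (∀ v : Fin 3 → ℤ, f.evalVec (B.mulVec v) = (p : ℤ) ^ k * g.evalVec v) ∧
    ¬ ∀ v : Fin 3 → ℤ, (p : ℤ) ∣ g.evalVec v

/-- The order of the (finite, for positive definite forms) integral isometry group. -/
def autCount (f : TernaryQF) : ℕ :=
  Set.ncard {U : Matrix (Fin 3) (Fin 3) ℤ | IsUnit U.det ∧
    (U.map ((↑) : ℤ → ℚ)).transpose * f.gram * U.map ((↑) : ℤ → ℚ) = f.gram}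

end TernaryQF

open TernaryQF

set_option maxHeartbeats 1000000

lemma isUnit_int_padic (p : ℕ) [Fact p.Prime] {k : ℤ} (h : ¬ (p:ℤ) ∣ k) :
    IsUnit ((k : ℤ_[p])) :=
  PadicInt.isUnit_iff.2 (le_antisymm (PadicInt.norm_le_one _)
    (not_lt.1 fun hlt => h ((PadicInt.norm_int_lt_one_iff_dvd k).1 hlt)))

lemma equivZp_of_int (p : ℕ) [Fact p.Prime] (f g : TernaryQF)
    (N : Matrix (Fin 3) (Fin 3) ℤ) (c : ℤ) (hc : IsUnit ((c : ℤ_[p])))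
    (hdet : N.det = c ^ 3 ∨ N.det = - c ^ 3)
    (h : (N.map ((↑) : ℤ → ℚ)).transpose * f.gram * N.map ((↑) : ℤ → ℚ)
        = (c ^ 2 : ℚ) • g.gram) :
    EquivZp p (gramPadic p f) (gramPadic p g) := by
  obtain ⟨u, hu⟩ := hc
  set d : ℤ_[p] := ((u⁻¹ : ℤ_[p]ˣ) : ℤ_[p]) with hd
  have hdc : d * (c : ℤ_[p]) = 1 := by rw [hd, ← hu]; exact u.inv_mul
  refine ⟨d • N.map (fun m : ℤ => (m : ℤ_[p])), ?_, ?_⟩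
  · have h1 : (N.map (fun m : ℤ => (m : ℤ_[p]))).det = ((N.det : ℤ) : ℤ_[p]) := by
      rw [Matrix.det_fin_three, Matrix.det_fin_three]
      simp only [Matrix.map_apply]
      push_cast
      ring
    rw [Matrix.det_smul, h1, Fintype.card_fin]
    have hu3 : d ^ 3 * ((c : ℤ) : ℤ_[p]) ^ 3 = 1 := by rw [← mul_pow, hdc, one_pow]
    rcases hdet with h2 | h2 <;> rw [h2] <;> push_cast
    · exact hu3 ▸ isUnit_one
    · rw [mul_neg, hu3]
      exact isUnit_one.neg
  · -- the quadratic identity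
    set P : Matrix (Fin 3) (Fin 3) ℚ_[p] :=
      (N.map ((↑) : ℤ → ℚ)).map (fun x : ℚ => (x : ℚ_[p])) with hP
    set e : ℚ_[p] := coeQp d with he
    have hmap : (d • N.map (fun m : ℤ => (m : ℤ_[p]))).map coeQp = e • P := by
      ext i j
      simp only [Matrix.map_apply, Matrix.smul_apply, hP, he, coeQp, smul_eq_mul]
      push_cast
      ring
    have hec : e * ((c : ℤ) : ℚ_[p]) = 1 := by
      have : coeQp (d * (c : ℤ_[p])) = coeQp 1 := by rw [hdc]
      simpa [coeQp, he] using this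
    have key : P.transpose * gramPadic p f * P = ((c : ℚ_[p]) ^ 2) • gramPadic p g := by
      have h2 := congrArg (fun M : Matrix (Fin 3) (Fin 3) ℚ => M.map (fun x : ℚ => (x : ℚ_[p]))) h
      ext i j
      have h3 := congrFun (congrFun h2 i) j
      simp only [Matrix.map_apply, Matrix.mul_apply, Matrix.transpose_apply, Matrix.smul_apply,
        Fin.sum_univ_three, smul_eq_mul, hP, gramPadic] at h3 ⊢
      push_cast at h3 ⊢
      convert h3 using 2 <;> push_cast <;> ring
    rw [hmap, Matrix.transpose_smul, Matrix.smul_mul, Matrix.mul_smul, Matrix.smul_mul,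
      ]
    rw [key, smul_smul, smul_smul]
    have h4 : e * e * (c : ℚ_[p]) ^ 2 = 1 := by
      have h5 : (e * ((c:ℤ):ℚ_[p])) * (e * ((c:ℤ):ℚ_[p])) = 1 := by rw [hec]; ring
      calc e * e * (c : ℚ_[p]) ^ 2 = (e * ((c:ℤ):ℚ_[p])) * (e * ((c:ℤ):ℚ_[p])) := by
            push_cast; ring
        _ = 1 := h5
    rw [h4, one_smul]

lemma abs_le_sq_int (x : ℤ) : |x| ≤ x ^ 2 := by
  rcases eq_or_ne x 0 with h | h
  · simp [h]
  · have h1 : 1 ≤ |x| := Int.one_le_abs h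
    calc |x| = 1 * |x| := (one_mul _).symm
      _ ≤ |x| * |x| := mul_le_mul_of_nonneg_right h1 (abs_nonneg x)
      _ = x ^ 2 := by rw [← abs_mul, abs_mul_self, ← pow_two]

lemma sq_mod_four (x : ℤ) : x ^ 2 % 4 = x % 2 := by
  rcases Int.even_or_odd x with ⟨k, hk⟩ | ⟨k, hk⟩ <;> subst hk
  · have h : (k + k) ^ 2 = 4 * k ^ 2 := by ring
    omega
  · have h : (2 * k + 1) ^ 2 = 4 * (k ^ 2 + k) + 1 := by ring
    omega

lemma evalVec_mk (a b c d e g : ℤ) (v : Fin 3 → ℤ) :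
    (TernaryQF.mk a b c d e g).evalVec v =
      a * v 0 ^ 2 + b * v 1 ^ 2 + c * v 2 ^ 2 + d * (v 1 * v 2) + e * (v 2 * v 0) +
        g * (v 0 * v 1) := by
  simp [TernaryQF.evalVec, TernaryQF.eval, TernaryQF.evalR]

lemma vec3_eta (v : Fin 3 → ℤ) : ![v 0, v 1, v 2] = v := by
  funext i; fin_cases i <;> simp

section count
variable (s Nv : ℤ)

def Ssol : Set (Fin 3 → ℤ) := {v | v 0 ^ 2 + v 1 ^ 2 + 8 * s * v 2 ^ 2 = Nv}
def T1 : Set (Fin 3 → ℤ) := {v | v ∈ Ssol s Nv ∧ (v 1 - v 2) % 2 = 0}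
def T1' : Set (Fin 3 → ℤ) := {v | v ∈ Ssol s Nv ∧ (v 0 - v 2) % 2 = 0}
def T2 : Set (Fin 3 → ℤ) := {v | v ∈ Ssol s Nv ∧ v 2 % 2 = 0}
def T3 : Set (Fin 3 → ℤ) := {v | v ∈ Ssol s Nv ∧ (v 0 + v 1 + v 2) % 2 = 0}

lemma Ssol_finite (hs : 1 ≤ s) : (Ssol s Nv).Finite := by
  apply Set.Finite.subset (Set.finite_Icc (fun _ : Fin 3 => -Nv) (fun _ => Nv))
  intro v hv
  simp only [Ssol, Set.mem_setOf_eq] at hv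
  have hz : v 2 ^ 2 ≤ 8 * s * v 2 ^ 2 := by nlinarith [sq_nonneg (v 2)]
  have hx := abs_le_sq_int (v 0); have hy := abs_le_sq_int (v 1)
  have hzz := abs_le_sq_int (v 2)
  have lx := le_abs_self (v 0); have lx' := neg_abs_le (v 0)
  have ly := le_abs_self (v 1); have ly' := neg_abs_le (v 1)
  have lz := le_abs_self (v 2); have lz' := neg_abs_le (v 2)
  have q0 := sq_nonneg (v 0); have q1 := sq_nonneg (v 1); have q2 := sq_nonneg (v 2)
  rw [Set.mem_Icc]
  constructor <;> intro i <;> fin_cases i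
  · show -Nv ≤ v 0; nlinarith
  · show -Nv ≤ v 1; nlinarith
  · show -Nv ≤ v 2; nlinarith
  · show v 0 ≤ Nv; nlinarith
  · show v 1 ≤ Nv; nlinarith
  · show v 2 ≤ Nv; nlinarith

lemma r_K1 (t : ℕ) (hst : s = 3 ^ t) :
    (TernaryQF.mk 1 4 (8 * 3 ^ t + 1) 4 0 0).r Nv = (T1 s Nv).ncard := by
  have hinj : Function.Injective (fun v : Fin 3 → ℤ => (![v 0, 2 * v 1 + v 2, v 2] : Fin 3 → ℤ)) := by
    intro v v' h
    have h0 := congrFun h 0; have h1 := congrFun h 1; have h2 := congrFun h 2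
    simp only [Matrix.cons_val_zero, Matrix.cons_val_one, Matrix.head_cons,
      Matrix.cons_val_two, Matrix.tail_cons] at h0 h1 h2
    funext i; fin_cases i
    · show v 0 = v' 0; omega
    · show v 1 = v' 1; omega
    · show v 2 = v' 2; omega
  have himg : T1 s Nv =
      (fun v : Fin 3 → ℤ => (![v 0, 2 * v 1 + v 2, v 2] : Fin 3 → ℤ)) ''
        {v | (TernaryQF.mk 1 4 (8 * 3 ^ t + 1) 4 0 0).evalVec v = Nv} := by
    ext w
    simp only [T1, Ssol, Set.mem_setOf_eq, Set.mem_image, evalVec_mk]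
    constructor
    · rintro ⟨hq, hpar⟩
      refine ⟨![w 0, (w 1 - w 2) / 2, w 2], ?_, ?_⟩
      · have hy : 2 * ((w 1 - w 2) / 2) = w 1 - w 2 :=
          Int.mul_ediv_cancel' (Int.dvd_of_emod_eq_zero hpar)
        simp only [Matrix.cons_val_zero, Matrix.cons_val_one, Matrix.head_cons,
          Matrix.cons_val_two, Matrix.tail_cons]
        rw [hst] at hq
        linear_combination hq + (2 * ((w 1 - w 2) / 2) + w 2 + w 1) * hy
      · have hy : 2 * ((w 1 - w 2) / 2) = w 1 - w 2 :=
          Int.mul_ediv_cancel' (Int.dvd_of_emod_eq_zero hpar)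
        have hB : 2 * ((w 1 - w 2) / 2) + w 2 = w 1 := by omega
        conv_rhs => rw [← vec3_eta w]
        simp [hB]
    · rintro ⟨v, hq, rfl⟩
      simp only [Matrix.cons_val_zero, Matrix.cons_val_one, Matrix.head_cons,
        Matrix.cons_val_two, Matrix.tail_cons]
      rw [hst]
      constructor
      · linear_combination hq
      · omega
  rw [TernaryQF.r, himg, Set.ncard_image_of_injective _ hinj]

lemma r_K2 (t : ℕ) (hst : s = 3 ^ t) :
    (TernaryQF.mk 1 1 (32 * 3 ^ t) 0 0 0).r Nv = (T2 s Nv).ncard := by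
  have hinj : Function.Injective
      (fun v : Fin 3 → ℤ => (![v 0, v 1, 2 * v 2] : Fin 3 → ℤ)) := by
    intro v v' h
    have h0 := congrFun h 0; have h1 := congrFun h 1; have h2 := congrFun h 2
    simp only [Matrix.cons_val_zero, Matrix.cons_val_one, Matrix.head_cons,
      Matrix.cons_val_two, Matrix.tail_cons] at h0 h1 h2
    funext i; fin_cases i
    · show v 0 = v' 0; omega
    · show v 1 = v' 1; omega
    · show v 2 = v' 2; omega
  have himg : T2 s Nv =
      (fun v : Fin 3 → ℤ => (![v 0, v 1, 2 * v 2] : Fin 3 → ℤ)) ''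
        {v | (TernaryQF.mk 1 1 (32 * 3 ^ t) 0 0 0).evalVec v = Nv} := by
    ext w
    simp only [T2, Ssol, Set.mem_setOf_eq, Set.mem_image, evalVec_mk]
    constructor
    · rintro ⟨hq, hpar⟩
      refine ⟨![w 0, w 1, w 2 / 2], ?_, ?_⟩
      · have hz : 2 * (w 2 / 2) = w 2 :=
          Int.mul_ediv_cancel' (Int.dvd_of_emod_eq_zero hpar)
        simp only [Matrix.cons_val_zero, Matrix.cons_val_one, Matrix.head_cons,
          Matrix.cons_val_two, Matrix.tail_cons]
        rw [hst] at hq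
        linear_combination hq + 8 * (3:ℤ) ^ t * (2 * (w 2 / 2) + w 2) * hz
      · have hB : 2 * (w 2 / 2) = w 2 := by omega
        conv_rhs => rw [← vec3_eta w]
        simp [hB]
    · rintro ⟨v, hq, rfl⟩
      simp only [Matrix.cons_val_zero, Matrix.cons_val_one, Matrix.head_cons,
        Matrix.cons_val_two, Matrix.tail_cons]
      rw [hst]
      constructor
      · linear_combination hq
      · omega
  rw [TernaryQF.r, himg, Set.ncard_image_of_injective _ hinj]

lemma r_K3 (t : ℕ) (hst : s = 3 ^ t) :
    (TernaryQF.mk 2 2 (8 * 3 ^ t + 1) 2 2 0).r Nv = (T3 s Nv).ncard := by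
  have hinj : Function.Injective
      (fun v : Fin 3 → ℤ => (![v 0 + v 1 + v 2, v 0 - v 1, v 2] : Fin 3 → ℤ)) := by
    intro v v' h
    have h0 := congrFun h 0; have h1 := congrFun h 1; have h2 := congrFun h 2
    simp only [Matrix.cons_val_zero, Matrix.cons_val_one, Matrix.head_cons,
      Matrix.cons_val_two, Matrix.tail_cons] at h0 h1 h2
    funext i; fin_cases i
    · show v 0 = v' 0; omega
    · show v 1 = v' 1; omega
    · show v 2 = v' 2; omega
  have himg : T3 s Nv =
      (fun v : Fin 3 → ℤ => (![v 0 + v 1 + v 2, v 0 - v 1, v 2] : Fin 3 → ℤ)) ''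
        {v | (TernaryQF.mk 2 2 (8 * 3 ^ t + 1) 2 2 0).evalVec v = Nv} := by
    ext w
    simp only [T3, Ssol, Set.mem_setOf_eq, Set.mem_image, evalVec_mk]
    constructor
    · rintro ⟨hq, hpar⟩
      refine ⟨![(w 0 + w 1 - w 2) / 2, (w 0 - w 1 - w 2) / 2, w 2], ?_, ?_⟩
      · have hu : (w 0 + w 1 - w 2) / 2 + (w 0 - w 1 - w 2) / 2 + w 2 = w 0 := by omega
        have hv : (w 0 + w 1 - w 2) / 2 - (w 0 - w 1 - w 2) / 2 = w 1 := by omega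
        simp only [Matrix.cons_val_zero, Matrix.cons_val_one, Matrix.head_cons,
          Matrix.cons_val_two, Matrix.tail_cons]
        rw [hst] at hq
        linear_combination hq +
          ((w 0 + w 1 - w 2) / 2 + (w 0 - w 1 - w 2) / 2 + w 2 + w 0) * hu +
          ((w 0 + w 1 - w 2) / 2 - (w 0 - w 1 - w 2) / 2 + w 1) * hv
      · have hu : (w 0 + w 1 - w 2) / 2 + (w 0 - w 1 - w 2) / 2 + w 2 = w 0 := by omega
        have hv : (w 0 + w 1 - w 2) / 2 - (w 0 - w 1 - w 2) / 2 = w 1 := by omega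
        conv_rhs => rw [← vec3_eta w]
        simp [hu, hv]
    · rintro ⟨v, hq, rfl⟩
      simp only [Matrix.cons_val_zero, Matrix.cons_val_one, Matrix.head_cons,
        Matrix.cons_val_two, Matrix.tail_cons]
      rw [hst]
      constructor
      · linear_combination hq
      · omega
  rw [TernaryQF.r, himg, Set.ncard_image_of_injective _ hinj]

lemma T1'_ncard : (T1' s Nv).ncard = (T1 s Nv).ncard := by
  have hinj : Function.Injective
      (fun v : Fin 3 → ℤ => (![v 1, v 0, v 2] : Fin 3 → ℤ)) := by
    intro v v' h
    have h0 := congrFun h 0; have h1 := congrFun h 1; have h2 := congrFun h 2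
    simp only [Matrix.cons_val_zero, Matrix.cons_val_one, Matrix.head_cons,
      Matrix.cons_val_two, Matrix.tail_cons] at h0 h1 h2
    funext i; fin_cases i
    · show v 0 = v' 0; omega
    · show v 1 = v' 1; omega
    · show v 2 = v' 2; omega
  have himg : T1' s Nv =
      (fun v : Fin 3 → ℤ => (![v 1, v 0, v 2] : Fin 3 → ℤ)) '' T1 s Nv := by
    ext w
    simp only [T1, T1', Ssol, Set.mem_setOf_eq, Set.mem_image]
    constructor
    · rintro ⟨hq, hpar⟩
      refine ⟨![w 1, w 0, w 2], ⟨?_, ?_⟩, ?_⟩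
      · simp only [Matrix.cons_val_zero, Matrix.cons_val_one, Matrix.head_cons,
          Matrix.cons_val_two, Matrix.tail_cons]
        linear_combination hq
      · simp only [Matrix.cons_val_zero, Matrix.cons_val_one, Matrix.head_cons,
          Matrix.cons_val_two, Matrix.tail_cons]
        omega
      · conv_rhs => rw [← vec3_eta w]
        simp
    · rintro ⟨v, ⟨hq, hpar⟩, rfl⟩
      simp only [Matrix.cons_val_zero, Matrix.cons_val_one, Matrix.head_cons,
        Matrix.cons_val_two, Matrix.tail_cons]
      exact ⟨by linear_combination hq, by omega⟩
  rw [himg, Set.ncard_image_of_injective _ hinj]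

end count

lemma parity_info (s Nv x y z : ℤ) (hq : x ^ 2 + y ^ 2 + 8 * s * z ^ 2 = Nv) :
    Nv % 4 = x % 2 + y % 2 := by
  have h1 := sq_mod_four x
  have h2 := sq_mod_four y
  obtain ⟨C, hC⟩ : ∃ C, 8 * s * z ^ 2 = 4 * C := ⟨2 * s * z ^ 2, by ring⟩
  rw [hC] at hq
  generalize x ^ 2 = A at hq h1
  generalize y ^ 2 = B at hq h2
  omega

lemma count_main (t n : ℕ) :
    2 * (TernaryQF.mk 1 4 (8 * 3 ^ t + 1) 4 0 0).r ((n : ℤ) ^ 2) =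
      (TernaryQF.mk 1 1 (32 * 3 ^ t) 0 0 0).r ((n : ℤ) ^ 2) +
        (TernaryQF.mk 2 2 (8 * 3 ^ t + 1) 2 2 0).r ((n : ℤ) ^ 2) := by
  set s : ℤ := 3 ^ t with hst
  set Nv : ℤ := (n : ℤ) ^ 2 with hNv
  have hs1 : (1 : ℤ) ≤ s := one_le_pow₀ (by norm_num)
  rw [r_K1 s Nv t hst, r_K2 s Nv t hst, r_K3 s Nv t hst]
  have hfin := Ssol_finite s Nv hs1
  have hfin1 : (T1 s Nv).Finite := hfin.subset fun v hv => hv.1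
  have hfin1' : (T1' s Nv).Finite := hfin.subset fun v hv => hv.1
  have hfin2 : (T2 s Nv).Finite := hfin.subset fun v hv => hv.1
  have hfin3 : (T3 s Nv).Finite := hfin.subset fun v hv => hv.1
  have hpar : ∀ v ∈ Ssol s Nv, Nv % 4 = v 0 % 2 + v 1 % 2 := fun v hv =>
    parity_info s Nv (v 0) (v 1) (v 2) hv
  rcases Nat.even_or_odd n with he | ho
  · -- n even : 4 ∣ Nv and all three sets coincide
    have hn2 : (n : ℤ) % 2 = 0 := by
      obtain ⟨k, hk⟩ := he
      subst hk
      push_cast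
      omega
    have hN4 : Nv % 4 = 0 := by rw [hNv, sq_mod_four]; exact hn2
    have h12 : T1 s Nv = T2 s Nv := by
      ext v
      simp only [T1, T2, Set.mem_setOf_eq, and_congr_right_iff]
      intro hv
      have := hpar v hv
      omega
    have h32 : T3 s Nv = T2 s Nv := by
      ext v
      simp only [T3, T2, Set.mem_setOf_eq, and_congr_right_iff]
      intro hv
      have := hpar v hv
      omega
    rw [h12, h32]
    ring
  · -- n odd
    have hn2 : (n : ℤ) % 2 = 1 := by
      obtain ⟨k, hk⟩ := ho
      subst hk
      push_cast
      omega
    have hN4 : Nv % 4 = 1 := by rw [hNv, sq_mod_four]; exact hn2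
    have hd11 : Disjoint (T1 s Nv) (T1' s Nv) := by
      rw [Set.disjoint_left]
      rintro v ⟨hv, h1⟩ ⟨_, h2⟩
      have := hpar v hv
      omega
    have hu11 : T1 s Nv ∪ T1' s Nv = Ssol s Nv := by
      ext v
      simp only [T1, T1', Set.mem_union, Set.mem_setOf_eq]
      constructor
      · rintro (⟨hv, _⟩ | ⟨hv, _⟩) <;> exact hv
      · intro hv
        have := hpar v hv
        by_cases h1 : (v 1 - v 2) % 2 = 0
        · exact Or.inl ⟨hv, h1⟩
        · exact Or.inr ⟨hv, by omega⟩
    have hd23 : Disjoint (T2 s Nv) (T3 s Nv) := by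
      rw [Set.disjoint_left]
      rintro v ⟨hv, h1⟩ ⟨_, h2⟩
      have := hpar v hv
      omega
    have hu23 : T2 s Nv ∪ T3 s Nv = Ssol s Nv := by
      ext v
      simp only [T2, T3, Set.mem_union, Set.mem_setOf_eq]
      constructor
      · rintro (⟨hv, _⟩ | ⟨hv, _⟩) <;> exact hv
      · intro hv
        have := hpar v hv
        by_cases h1 : v 2 % 2 = 0
        · exact Or.inl ⟨hv, h1⟩
        · exact Or.inr ⟨hv, by omega⟩
    calc 2 * (T1 s Nv).ncard = (T1 s Nv).ncard + (T1' s Nv).ncard := by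
          rw [T1'_ncard]; ring
      _ = (T1 s Nv ∪ T1' s Nv).ncard := (Set.ncard_union_eq hd11 hfin1 hfin1').symm
      _ = (T2 s Nv ∪ T3 s Nv).ncard := by rw [hu11, hu23]
      _ = (T2 s Nv).ncard + (T3 s Nv).ncard := Set.ncard_union_eq hd23 hfin2 hfin3


/-- `K₁ = x²+4y²+(8·3ᵗ+1)z²+4yz`, `K₂ = x²+y²+32·3ᵗz²`,
`K₃ = 2x²+2y²+(8·3ᵗ+1)z²+2yz+2zx` lie in one genus and `2r(n²,K₁) = r(n²,K₂)+r(n²,K₃)`. -/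
theorem stmt15 (t : ℕ) :
    SameGenus (TernaryQF.mk 1 4 (8 * 3 ^ t + 1) 4 0 0) (TernaryQF.mk 1 1 (32 * 3 ^ t) 0 0 0) ∧
    SameGenus (TernaryQF.mk 1 4 (8 * 3 ^ t + 1) 4 0 0)
      (TernaryQF.mk 2 2 (8 * 3 ^ t + 1) 2 2 0) ∧
    ∀ n : ℕ, 0 < n →
      2 * (TernaryQF.mk 1 4 (8 * 3 ^ t + 1) 4 0 0).r ((n : ℤ) ^ 2) =
        (TernaryQF.mk 1 1 (32 * 3 ^ t) 0 0 0).r ((n : ℤ) ^ 2) +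
          (TernaryQF.mk 2 2 (8 * 3 ^ t + 1) 2 2 0).r ((n : ℤ) ^ 2) := by
  refine ⟨?_, ?_, fun n _ => count_main t n⟩
  · intro p hp
    by_cases h2 : p = 2
    · subst h2
      refine equivZp_of_int 2 _ _
        !![1 + 2 * 3 ^ t, 0, 0; 0, -(3:ℤ) ^ t, -(6 * 3 ^ t + 1); 0, 1, 2 - 4 * 3 ^ t]
        (1 + 2 * 3 ^ t) (isUnit_int_padic 2 ?_) ?_ ?_
      · intro hdvd
        omega
      · left
        rw [Matrix.det_fin_three]
        simp
        ring
      · ext i j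
        fin_cases i <;> fin_cases j <;>
          simp [Matrix.mul_apply, Fin.sum_univ_three, TernaryQF.gram, Matrix.map_apply,
            Matrix.vecHead, Matrix.vecTail] <;>
          push_cast <;> ring
    · refine equivZp_of_int p _ _ !![2, 0, 0; 0, 1, -2; 0, 0, 4] 2
        (isUnit_int_padic p ?_) ?_ ?_
      · intro hdvd
        exact h2 ((Nat.prime_dvd_prime_iff_eq hp.out Nat.prime_two).1 (by exact_mod_cast hdvd))
      · left
        rw [Matrix.det_fin_three]
        norm_num
        rfl
      · ext i j
        fin_cases i <;> fin_cases j <;>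
          simp [Matrix.mul_apply, Fin.sum_univ_three, TernaryQF.gram, Matrix.map_apply,
            Matrix.vecHead, Matrix.vecTail] <;>
          push_cast <;> ring
  · intro p hp
    by_cases h2 : p = 2
    · subst h2
      refine equivZp_of_int 2 _ _
        !![1 - 2 * 3 ^ t, 2 * 3 ^ t - 1, -(8 * 3 ^ t); (3:ℤ) ^ t, 3 ^ t + 1, 2 * 3 ^ t; 1, -1, 1 - 2 * 3 ^ t]
        (1 + 2 * 3 ^ t) (isUnit_int_padic 2 ?_) ?_ ?_
      · intro hdvd
        omega
      · left
        rw [Matrix.det_fin_three]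
        simp
        ring
      · ext i j
        fin_cases i <;> fin_cases j <;>
          simp [Matrix.mul_apply, Fin.sum_univ_three, TernaryQF.gram, Matrix.map_apply,
            Matrix.vecHead, Matrix.vecTail] <;>
          push_cast <;> ring
    · refine equivZp_of_int p _ _ !![2, 2, 2; 1, -1, -1; 0, 0, 2] 2
        (isUnit_int_padic p ?_) ?_ ?_
      · intro hdvd
        exact h2 ((Nat.prime_dvd_prime_iff_eq hp.out Nat.prime_two).1 (by exact_mod_cast hdvd))
      · right
        rw [Matrix.det_fin_three]
        norm_num
        rfl
      · ext i j
        fin_cases i <;> fin_cases j <;>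
          simp [Matrix.mul_apply, Fin.sum_univ_three, TernaryQF.gram, Matrix.map_apply,
            Matrix.vecHead, Matrix.vecTail] <;>
          push_cast <;> ring
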